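/- Let m ≥ 1, let O ⊆ ℝ^m be an open set, let f : O → ℝ be such that every point x̄ ∈ O admits an open neighbourhood V ⊆ O on which f has a lower-C² representation, and let X be a nonempty compact subset of O. Then there exists an open set O' with X ⊆ O' ⊆ O such that f has a single common lower-C² representation valid on all of O'; that is, there exist a compact topological space T and a family (f_t)_{t∈T} of functions on O' with f = max_{t∈T} f_t on O', and the maps (t,x) ↦ f_t(x), (t,x) ↦ ∇f_t(x), and (t,x) ↦ ∇²f_t(x) continuous on T × O'. -/

import Mathlib

set_option maxHeartbeats 1000000

set_option linter.unusedVariables false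
open Set Filter Metric
open scoped ContDiff

theorem inf_le1 : (1 : WithTop ℕ∞) ≤ ∞ := by exact_mod_cast le_top
theorem inf_le2 : (2 : WithTop ℕ∞) ≤ ∞ := by
  have : ((2 : ℕ∞) : WithTop ℕ∞) ≤ ∞ := by exact_mod_cast le_top
  simpa using this
theorem inf_succ : ∞ + 1 ≤ ∞ := by exact_mod_cast le_top

noncomputable section
variable {F : Type*} [NormedAddCommGroup F] [InnerProductSpace ℝ F] [CompleteSpace F]

def gradCLM (F : Type*) [NormedAddCommGroup F] [InnerProductSpace ℝ F] [CompleteSpace F] :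
    (F →L[ℝ] ℝ) →L[ℝ] F :=
  LinearMap.mkContinuous
    { toFun := fun L => (InnerProductSpace.toDual ℝ F).symm L
      map_add' := fun L₁ L₂ => by simp
      map_smul' := fun r L => by simp }
    1 (fun L => by simp)

theorem gradient_eq_gradCLM (f : F → ℝ) (x : F) :
    gradient f x = gradCLM F (fderiv ℝ f x) := rfl

theorem innerSL_gradient (f : F → ℝ) (x : F) :
    innerSL ℝ (gradient f x) = fderiv ℝ f x := by
  unfold gradient
  ext y
  simp [← InnerProductSpace.toDual_apply_apply]

theorem differentiableAt_gradient' {f : F → ℝ} {x : F}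
    (h : DifferentiableAt ℝ (fderiv ℝ f) x) : DifferentiableAt ℝ (gradient f) x :=
  (gradCLM F).differentiableAt.comp x h

theorem contDiff_gradient' {f : F → ℝ} (h : ContDiff ℝ ∞ f) :
    ContDiff ℝ ∞ (gradient f) :=
  (gradCLM F).contDiff.comp (h.fderiv_right inf_succ)

theorem piece_glue {T : Type*} [TopologicalSpace T]
    {V : Set F} (hV : IsOpen V)
    {h : T → F → ℝ}
    (hC2 : ∀ t, ContDiffOn ℝ 2 (h t) V)
    (hcont0 : ContinuousOn (fun p : T × F => h p.1 p.2) (Set.univ ×ˢ V))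
    (hcont1 : ContinuousOn (fun p : T × F => gradient (h p.1) p.2) (Set.univ ×ˢ V))
    (hcont2 : ContinuousOn (fun p : T × F => fderiv ℝ (gradient (h p.1)) p.2) (Set.univ ×ˢ V))
    {χ : F → ℝ} (hχ : ContDiff ℝ ∞ χ) (hsupp : tsupport χ ⊆ V) (c : ℝ)
    {g : T → F → ℝ}
    (hg : ∀ t x, g t x = c + χ x * Set.indicator V (fun y => h t y - c) x) :
    (∀ t, ContDiff ℝ 2 (g t)) ∧
    Continuous (fun p : T × F => g p.1 p.2) ∧
    Continuous (fun p : T × F => gradient (g p.1) p.2) ∧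
    Continuous (fun p : T × F => fderiv ℝ (gradient (g p.1)) p.2) := by
  have hVc : IsOpen (tsupport χ)ᶜ := (isClosed_tsupport χ).isOpen_compl
  have hcover : ∀ x : F, x ∈ V ∨ x ∈ (tsupport χ)ᶜ := by
    intro x
    by_cases hx : x ∈ tsupport χ
    · exact Or.inl (hsupp hx)
    · exact Or.inr hx
  have hopenprod : IsOpen ((Set.univ : Set T) ×ˢ V) := isOpen_univ.prod hV
  -- eventual equality on V
  have hgV : ∀ (t : T), ∀ x ∈ V, g t =ᶠ[nhds x] fun y => c + χ y * (h t y - c) := by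
    intro t x hx
    filter_upwards [hV.mem_nhds hx] with y hy
    rw [hg, Set.indicator_of_mem hy]
  -- eventual equality off the support
  have hgC : ∀ (t : T), ∀ x ∈ (tsupport χ)ᶜ, g t =ᶠ[nhds x] fun _ => c := by
    intro t x hx
    filter_upwards [hVc.mem_nhds hx] with y hy
    rw [hg, image_eq_zero_of_notMem_tsupport hy, zero_mul, add_zero]
  -- basic differentiability facts
  have hht : ∀ (t : T), ∀ x ∈ V, ContDiffAt ℝ 2 (h t) x :=
    fun t x hx => (hC2 t).contDiffAt (hV.mem_nhds hx)
  have dh : ∀ (t : T), ∀ x ∈ V, DifferentiableAt ℝ (h t) x :=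
    fun t x hx => (hht t x hx).differentiableAt two_ne_zero
  have dGh : ∀ (t : T), ∀ x ∈ V, DifferentiableAt ℝ (gradient (h t)) x := by
    intro t x hx
    exact differentiableAt_gradient'
      (((hht t x hx).fderiv_right (le_refl 2)).differentiableAt one_ne_zero)
  have dχ : Differentiable ℝ χ := hχ.differentiable (by simp)
  have hGχ : ContDiff ℝ ∞ (gradient χ) := contDiff_gradient' hχ
  -- gradient formula on V
  have grad_formula : ∀ (t : T), ∀ x ∈ V,
      gradient (g t) x = χ x • gradient (h t) x + (h t x - c) • gradient χ x := by
    intro t x hx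
    have hfd : fderiv ℝ (g t) x
        = χ x • fderiv ℝ (h t) x + (h t x - c) • fderiv ℝ χ x := by
      rw [(hgV t x hx).fderiv_eq, fderiv_const_add,
        fderiv_fun_mul (dχ x) ((dh t x hx).sub_const c), fderiv_sub_const]
    rw [gradient_eq_gradCLM, hfd, map_add, map_smul, map_smul,
      ← gradient_eq_gradCLM, ← gradient_eq_gradCLM]
  -- gradient vanishes off the support
  have gradC : ∀ (t : T), ∀ x ∈ (tsupport χ)ᶜ, gradient (g t) x = 0 := by
    intro t x hx
    rw [gradient_eq_gradCLM, (hgC t x hx).fderiv_eq, fderiv_const_apply, map_zero]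
  -- Hessian formula on V
  have hess_formula : ∀ (t : T), ∀ x ∈ V,
      fderiv ℝ (gradient (g t)) x =
        (χ x • fderiv ℝ (gradient (h t)) x
          + (fderiv ℝ χ x).smulRight (gradient (h t) x)) +
        ((h t x - c) • fderiv ℝ (gradient χ) x
          + (innerSL ℝ (gradient (h t) x)).smulRight (gradient χ x)) := by
    intro t x hx
    have hev : gradient (g t) =ᶠ[nhds x]
        fun y => χ y • gradient (h t) y + (h t y - c) • gradient χ y := by
      filter_upwards [hV.mem_nhds hx] with y hy using grad_formula t y hy
    rw [hev.fderiv_eq,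
      fderiv_fun_add ((dχ x).fun_smul (dGh t x hx))
        (((dh t x hx).sub_const c).fun_smul ((hGχ.differentiable (by simp)) x)),
      fderiv_fun_smul (dχ x) (dGh t x hx),
      fderiv_fun_smul ((dh t x hx).sub_const c) ((hGχ.differentiable (by simp)) x),
      fderiv_sub_const, innerSL_gradient]
  -- Hessian vanishes off the support
  have hessC : ∀ (t : T), ∀ x ∈ (tsupport χ)ᶜ, fderiv ℝ (gradient (g t)) x = 0 := by
    intro t x hx
    have hev : gradient (g t) =ᶠ[nhds x] fun _ => (0 : F) := by
      filter_upwards [hVc.mem_nhds hx] with y hy using gradC t y hy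
    rw [hev.fderiv_eq, fderiv_const_apply]
  refine ⟨?_, ?_, ?_, ?_⟩
  · -- C² regularity
    intro t
    rw [contDiff_iff_contDiffAt]
    intro x
    rcases hcover x with hx | hx
    · exact ((contDiffAt_const (c := c)).add
        ((hχ.contDiffAt.of_le inf_le2).mul ((hht t x hx).sub contDiffAt_const))).congr_of_eventuallyEq
        (hgV t x hx)
    · exact contDiffAt_const.congr_of_eventuallyEq (hgC t x hx)
  · -- continuity of values
    rw [continuous_iff_continuousAt]
    rintro ⟨t, x⟩
    rcases hcover x with hx | hx
    · have hmem : ((t, x) : T × F) ∈ (Set.univ : Set T) ×ˢ V := ⟨Set.mem_univ _, hx⟩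
      have hK : ContinuousAt (fun p : T × F => c + χ p.2 * (h p.1 p.2 - c)) (t, x) :=
        continuousAt_const.add
          ((hχ.continuous.comp continuous_snd).continuousAt.mul
            ((hcont0.continuousAt (hopenprod.mem_nhds hmem)).sub continuousAt_const))
      refine hK.congr ?_
      filter_upwards [hopenprod.mem_nhds hmem] with q hq
      rw [hg, Set.indicator_of_mem hq.2]
    · refine (continuousAt_const (y := c)).congr ?_
      filter_upwards [(isOpen_univ.prod hVc).mem_nhds ⟨Set.mem_univ _, hx⟩] with q hq
      rw [hg, image_eq_zero_of_notMem_tsupport hq.2, zero_mul, add_zero]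
  · -- continuity of gradients
    rw [continuous_iff_continuousAt]
    rintro ⟨t, x⟩
    rcases hcover x with hx | hx
    · have hmem : ((t, x) : T × F) ∈ (Set.univ : Set T) ×ˢ V := ⟨Set.mem_univ _, hx⟩
      have hK : ContinuousAt (fun p : T × F =>
          χ p.2 • gradient (h p.1) p.2 + (h p.1 p.2 - c) • gradient χ p.2) (t, x) :=
        ((hχ.continuous.comp continuous_snd).continuousAt.smul
          (hcont1.continuousAt (hopenprod.mem_nhds hmem))).add
          (((hcont0.continuousAt (hopenprod.mem_nhds hmem)).sub continuousAt_const).smul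
            ((hGχ.continuous.comp continuous_snd).continuousAt))
      refine hK.congr ?_
      filter_upwards [hopenprod.mem_nhds hmem] with q hq
      exact (grad_formula q.1 q.2 hq.2).symm
    · refine (continuousAt_const (y := (0 : F))).congr ?_
      filter_upwards [(isOpen_univ.prod hVc).mem_nhds ⟨Set.mem_univ _, hx⟩] with q hq
      exact (gradC q.1 q.2 hq.2).symm
  · -- continuity of Hessians
    rw [continuous_iff_continuousAt]
    rintro ⟨t, x⟩
    have hsmulRight : Continuous (fun p : (F →L[ℝ] ℝ) × F => p.1.smulRight p.2) :=
      isBoundedBilinearMap_smulRight.continuous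
    rcases hcover x with hx | hx
    · have hmem : ((t, x) : T × F) ∈ (Set.univ : Set T) ×ˢ V := ⟨Set.mem_univ _, hx⟩
      have hc1 : ContinuousAt (fun p : T × F => gradient (h p.1) p.2) (t, x) :=
        hcont1.continuousAt (hopenprod.mem_nhds hmem)
      have hK : ContinuousAt (fun p : T × F =>
          (χ p.2 • fderiv ℝ (gradient (h p.1)) p.2
            + (fderiv ℝ χ p.2).smulRight (gradient (h p.1) p.2)) +
          ((h p.1 p.2 - c) • fderiv ℝ (gradient χ) p.2
            + (innerSL ℝ (gradient (h p.1) p.2)).smulRight (gradient χ p.2))) (t, x) := by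
        refine ContinuousAt.add (ContinuousAt.add ?_ ?_) (ContinuousAt.add ?_ ?_)
        · exact (hχ.continuous.comp continuous_snd).continuousAt.smul
            (hcont2.continuousAt (hopenprod.mem_nhds hmem))
        · exact hsmulRight.continuousAt.comp
            ((((hχ.continuous_fderiv (by simp)).comp continuous_snd).continuousAt).prodMk hc1)
        · exact ((hcont0.continuousAt (hopenprod.mem_nhds hmem)).sub continuousAt_const).smul
            (((hGχ.continuous_fderiv (by simp)).comp continuous_snd).continuousAt)
        · exact hsmulRight.continuousAt.comp
            ((((innerSL ℝ).continuous.continuousAt.comp hc1)).prodMk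
              ((hGχ.continuous.comp continuous_snd).continuousAt))
      refine hK.congr ?_
      filter_upwards [hopenprod.mem_nhds hmem] with q hq
      exact (hess_formula q.1 q.2 hq.2).symm
    · refine (continuousAt_const (y := (0 : F →L[ℝ] F))).congr ?_
      filter_upwards [(isOpen_univ.prod hVc).mem_nhds ⟨Set.mem_univ _, hx⟩] with q hq
      exact (hessC q.1 q.2 hq.2).symm

end
open Set Filter Metric

theorem continuous_sigma_prod {ι : Type*} {T : ι → Type*} [∀ i, TopologicalSpace (T i)]
    {E : Type*} [TopologicalSpace E] {α : Type*} [TopologicalSpace α]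
    {G : (Σ i, T i) × E → α}
    (hG : ∀ i, Continuous fun q : T i × E => G (⟨i, q.1⟩, q.2)) :
    Continuous G := by
  have heq : G = (fun q : Σ i, T i × E => G (⟨q.1, q.2.1⟩, q.2.2))
      ∘ (Homeomorph.sigmaProdDistrib : (Σ i, T i) × E ≃ₜ Σ i, T i × E) := by
    funext p
    obtain ⟨⟨i, t⟩, x⟩ := p
    rfl
  rw [heq]
  exact (continuous_sigma hG).comp (Homeomorph.continuous _)


open scoped RealInnerProductSpace




open scoped RealInnerProductSpace

/-- `(ft t)_{t ∈ T}` is a lower-C² representation of `f` on the set `V`: each `ft t`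
is C² on `V`, the values, gradients and Hessians depend continuously on
`(t, x) ∈ T × V`, and `f = max_{t ∈ T} ft t` on `V` (the maximum being attained). -/
def IsLowerC2Rep {m : ℕ} (T : Type) [TopologicalSpace T]
    (f : EuclideanSpace ℝ (Fin m) → ℝ)
    (ft : T → EuclideanSpace ℝ (Fin m) → ℝ)
    (V : Set (EuclideanSpace ℝ (Fin m))) : Prop :=
  (∀ t : T, ContDiffOn ℝ 2 (ft t) V) ∧
  ContinuousOn (fun p : T × EuclideanSpace ℝ (Fin m) => ft p.1 p.2)
    (Set.univ ×ˢ V) ∧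
  ContinuousOn (fun p : T × EuclideanSpace ℝ (Fin m) => gradient (ft p.1) p.2)
    (Set.univ ×ˢ V) ∧
  ContinuousOn
    (fun p : T × EuclideanSpace ℝ (Fin m) => fderiv ℝ (gradient (ft p.1)) p.2)
    (Set.univ ×ˢ V) ∧
  (∀ x ∈ V, (∀ t : T, ft t x ≤ f x) ∧ (∃ t : T, ft t x = f x))

theorem common_lowerC2_representation {m : ℕ} (hm : 1 ≤ m)
    (O : Set (EuclideanSpace ℝ (Fin m))) (hOopen : IsOpen O)
    (f : EuclideanSpace ℝ (Fin m) → ℝ)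
    (hloc : ∀ xbar ∈ O, ∃ V : Set (EuclideanSpace ℝ (Fin m)),
      IsOpen V ∧ xbar ∈ V ∧ V ⊆ O ∧
      ∃ (T : Type) (instT : TopologicalSpace T),
        @CompactSpace T instT ∧
        ∃ ft : T → EuclideanSpace ℝ (Fin m) → ℝ,
          @IsLowerC2Rep m T instT f ft V)
    (X : Set (EuclideanSpace ℝ (Fin m))) (hXne : X.Nonempty) (hXcpt : IsCompact X)
    (hXO : X ⊆ O) :
    ∃ O' : Set (EuclideanSpace ℝ (Fin m)),
      IsOpen O' ∧ X ⊆ O' ∧ O' ⊆ O ∧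
      ∃ (T : Type) (instT : TopologicalSpace T),
        @CompactSpace T instT ∧
        ∃ ft : T → EuclideanSpace ℝ (Fin m) → ℝ,
          @IsLowerC2Rep m T instT f ft O' := by
  classical
  have hloc' : ∀ x : X, ∃ V : Set (EuclideanSpace ℝ (Fin m)),
      IsOpen V ∧ (x : EuclideanSpace ℝ (Fin m)) ∈ V ∧ V ⊆ O ∧
      ∃ (T : Type) (instT : TopologicalSpace T),
        @CompactSpace T instT ∧
        ∃ ft : T → EuclideanSpace ℝ (Fin m) → ℝ, @IsLowerC2Rep m T instT f ft V :=
    fun x => hloc x (hXO x.2)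
  choose V hVopen hVmem hVO T instT hTcpt ft hrep using hloc'
  letI : ∀ x : X, TopologicalSpace (T x) := fun x => instT x
  -- radii
  have hδ : ∀ x : X, ∃ δ > 0, Metric.ball (x : EuclideanSpace ℝ (Fin m)) δ ⊆ V x :=
    fun x => Metric.isOpen_iff.mp (hVopen x) _ (hVmem x)
  choose δ hδpos hδV using hδ
  -- bump functions
  let bump : ∀ x : X, ContDiffBump (x : EuclideanSpace ℝ (Fin m)) := fun x =>
    ⟨δ x / 4, δ x / 2, by have := hδpos x; positivity, by have := hδpos x; linarith⟩
  have hsupp : ∀ x : X, tsupport (bump x) ⊆ V x := by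
    intro x
    rw [ContDiffBump.tsupport_eq]
    exact (Metric.closedBall_subset_ball (by have := hδpos x; simp only [bump]; linarith)).trans
      (hδV x)
  -- finite subcover
  obtain ⟨s, hs⟩ := hXcpt.elim_finite_subcover (fun x : X => Metric.ball (x : EuclideanSpace ℝ (Fin m)) (δ x / 4))
    (fun x => Metric.isOpen_ball)
    (fun y hy => Set.mem_iUnion.mpr ⟨⟨y, hy⟩, Metric.mem_ball_self (by have := hδpos ⟨y, hy⟩; positivity)⟩)
  have hsne : s.Nonempty := by
    obtain ⟨y, hy⟩ := hXne
    have := hs hy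
    rw [Set.mem_iUnion₂] at this
    obtain ⟨i, hi, -⟩ := this
    exact ⟨i, hi⟩
  -- the open set O'
  refine ⟨⋃ i ∈ s, Metric.ball (i : EuclideanSpace ℝ (Fin m)) (δ i / 4), isOpen_biUnion fun i _ => Metric.isOpen_ball,
    hs, ?_, ?_⟩
  · exact Set.iUnion₂_subset fun i _ =>
      (Metric.ball_subset_ball (by have := hδpos i; linarith)).trans ((hδV i).trans (hVO i))
  -- a uniform lower bound
  have hball_sub : ∀ i : X, Metric.ball (i : EuclideanSpace ℝ (Fin m)) (δ i / 4) ⊆ V i :=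
    fun i => (Metric.ball_subset_ball (by have := hδpos i; linarith)).trans (hδV i)
  have hTne : ∀ x : X, Nonempty (T x) := fun x => ⟨(((hrep x).2.2.2.2 _ (hVmem x)).2).choose⟩
  let t0 : ∀ x : X, T x := fun x => Classical.choice (hTne x)
  have hbound : ∀ x : X, ∃ b : ℝ, ∀ y ∈ Metric.closedBall (x : EuclideanSpace ℝ (Fin m)) (δ x / 2),
      b ≤ ft x (t0 x) y := by
    intro x
    have hcb : Metric.closedBall (x : EuclideanSpace ℝ (Fin m)) (δ x / 2) ⊆ V x :=
      (Metric.closedBall_subset_ball (by have := hδpos x; linarith)).trans (hδV x)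
    obtain ⟨y, hy, hmin⟩ := (isCompact_closedBall (x : EuclideanSpace ℝ (Fin m)) (δ x / 2)).exists_isMinOn
      ⟨x, Metric.mem_closedBall_self (by have := hδpos x; positivity)⟩
      (((hrep x).1 (t0 x)).continuousOn.mono hcb)
    exact ⟨ft x (t0 x) y, fun z hz => hmin hz⟩
  choose B hB using hbound
  set c : ℝ := s.inf' hsne B with hc
  have hcf : ∀ y ∈ ⋃ i ∈ s, Metric.ball (i : EuclideanSpace ℝ (Fin m)) (δ i / 4), c ≤ f y := by
    intro y hy
    rw [Set.mem_iUnion₂] at hy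
    obtain ⟨i, hi, hyball⟩ := hy
    have hyV : y ∈ V i := hball_sub i hyball
    have h1 : ft i (t0 i) y ≤ f y := ((hrep i).2.2.2.2 y hyV).1 (t0 i)
    have h2 : B i ≤ ft i (t0 i) y := hB i y
      (Metric.mem_closedBall.mpr (le_trans (le_of_lt (Metric.mem_ball.mp hyball))
        (by have := hδpos i; linarith)))
    have h3 : c ≤ B i := Finset.inf'_le B hi
    linarith
  -- the compact index type and the family
  letI : ∀ i : {i : X // i ∈ s}, CompactSpace (T i.1) := fun i => hTcpt i.1
  refine ⟨(i : {i : X // i ∈ s}) × T i.1, inferInstance, inferInstance, ?_⟩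
  refine ⟨fun t x => c + bump t.1.1 x * Set.indicator (V t.1.1) (fun y => ft t.1.1 t.2 y - c) x,
    ?_⟩
  have piece : ∀ i : {i : X // i ∈ s},
      (∀ t : T i.1, ContDiff ℝ 2 (fun x =>
        c + bump i.1 x * Set.indicator (V i.1) (fun y => ft i.1 t y - c) x)) ∧
      Continuous (fun p : T i.1 × EuclideanSpace ℝ (Fin m) =>
        c + bump i.1 p.2 * Set.indicator (V i.1) (fun y => ft i.1 p.1 y - c) p.2) ∧
      Continuous (fun p : T i.1 × EuclideanSpace ℝ (Fin m) => gradient (fun x =>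
        c + bump i.1 x * Set.indicator (V i.1) (fun y => ft i.1 p.1 y - c) x) p.2) ∧
      Continuous (fun p : T i.1 × EuclideanSpace ℝ (Fin m) => fderiv ℝ (gradient (fun x =>
        c + bump i.1 x * Set.indicator (V i.1) (fun y => ft i.1 p.1 y - c) x)) p.2) := by
    intro i
    exact piece_glue (hVopen i.1) (hrep i.1).1 (hrep i.1).2.1 (hrep i.1).2.2.1
      (hrep i.1).2.2.2.1 ((bump i.1).contDiff (n := (⊤ : ℕ∞))) (hsupp i.1) c (fun t x => rfl)
  refine ⟨?_, ?_, ?_, ?_, ?_⟩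
  · exact fun t => ((piece t.1).1 t.2).contDiffOn
  · exact (continuous_sigma_prod (fun i => (piece i).2.1)).continuousOn
  · exact (continuous_sigma_prod (fun i => (piece i).2.2.1)).continuousOn
  · exact (continuous_sigma_prod (fun i => (piece i).2.2.2)).continuousOn
  · intro x hx
    have hcfx : c ≤ f x := hcf x hx
    constructor
    · rintro ⟨i, t⟩
      dsimp only
      by_cases hxV : x ∈ V i.1
      · rw [Set.indicator_of_mem hxV]
        have h1 : ft i.1 t x ≤ f x := ((hrep i.1).2.2.2.2 x hxV).1 t
        have h3 : (0 : ℝ) ≤ bump i.1 x := (bump i.1).nonneg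
        have h4 : bump i.1 x ≤ 1 := (bump i.1).le_one
        nlinarith [mul_le_mul_of_nonneg_left (sub_le_sub_right h1 c) h3,
          mul_nonneg (sub_nonneg.mpr h4) (sub_nonneg.mpr hcfx)]
      · rw [Set.indicator_of_notMem hxV, mul_zero, add_zero]
        exact hcfx
    · rw [Set.mem_iUnion₂] at hx
      obtain ⟨i, hi, hxball⟩ := hx
      have hxV : x ∈ V i := hball_sub i hxball
      obtain ⟨t, ht⟩ := ((hrep i).2.2.2.2 x hxV).2
      refine ⟨⟨⟨i, hi⟩, t⟩, ?_⟩
      dsimp only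
      have hone : bump i x = 1 := (bump i).one_of_mem_closedBall
        (Metric.mem_closedBall.mpr (le_of_lt (Metric.mem_ball.mp hxball)))
      rw [Set.indicator_of_mem hxV, hone, one_mul, ← ht]
      ring
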